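/- (Lemma 2.) Let c ∈ ℝ (the RF relaying rate), M = 2^{2·c/B}, A = 2^{2·R_th/B}, Ā = max(max(0, (A − 1)/Ψ_s), (1 + Ψ_s·p − M)/(Ψ_s·M)), and B_s = min(p/2, (1 + Ψ_s·p)/(Ψ_s·A) − 1/Ψ_s). If Ā ≤ P ≤ B_s, then P is optimal for the hybrid-link problem: R_s(P) + min(R_{w→s}(P), c) = (B/2)·log₂(1 + Ψ_s·p), and for every real P' with 0 ≤ P' ≤ p one has R_s(P') + min(R_{w→s}(P'), c) ≤ R_s(P) + min(R_{w→s}(P), c). -/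

import Mathlib

/-- Lemma 2: if `Ā ≤ P ≤ B_s`, then `P` is optimal for the
hybrid-link problem: the objective equals `(B/2)·log₂(1 + Ψ_s·p)` and dominates
the objective at every `P' ∈ [0, p]`. -/
theorem stmt_9 (B p Ψs Rth c : ℝ) (hB : 0 < B) (hp : 0 < p)
    (hΨs : 0 < Ψs) (hRth : 0 ≤ Rth)
    (M A Abar Bs : ℝ)
    (hM : M = (2 : ℝ) ^ (2 * c / B))
    (hA : A = (2 : ℝ) ^ (2 * Rth / B))
    (hAbar : Abar = max (max 0 ((A - 1) / Ψs)) ((1 + Ψs * p - M) / (Ψs * M)))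
    (hBs : Bs = min (p / 2) ((1 + Ψs * p) / (Ψs * A) - 1 / Ψs))
    (P : ℝ) (hP1 : Abar ≤ P) (hP2 : P ≤ Bs) :
    (B / 2 * Real.logb 2 (1 + Ψs * P) +
        min (B / 2 * Real.logb 2 (1 + Ψs * (p - P) / (1 + Ψs * P))) c =
      B / 2 * Real.logb 2 (1 + Ψs * p)) ∧
    (∀ P' : ℝ, 0 ≤ P' → P' ≤ p →
      B / 2 * Real.logb 2 (1 + Ψs * P') +
          min (B / 2 * Real.logb 2 (1 + Ψs * (p - P') / (1 + Ψs * P'))) c ≤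
        B / 2 * Real.logb 2 (1 + Ψs * P) +
          min (B / 2 * Real.logb 2 (1 + Ψs * (p - P) / (1 + Ψs * P))) c) := by
  have hMpos : (0 : ℝ) < M := by
    rw [hM]; exact Real.rpow_pos_of_pos (by norm_num) _
  have hP0 : 0 ≤ P :=
    le_trans (le_trans (le_max_left 0 _) (le_max_left _ _)) (hAbar ▸ hP1)
  have h1P : (0 : ℝ) < 1 + Ψs * P := by positivity
  have h1p : (0 : ℝ) < 1 + Ψs * p := by positivity
  have hkey : 1 + Ψs * p ≤ M * (1 + Ψs * P) := by
    have h : (1 + Ψs * p - M) / (Ψs * M) ≤ P :=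
      le_trans (le_max_right _ _) (hAbar ▸ hP1)
    rw [div_le_iff₀ (by positivity)] at h
    nlinarith
  have hlog : ∀ x : ℝ, 0 < 1 + Ψs * x →
      Real.logb 2 (1 + Ψs * (p - x) / (1 + Ψs * x)) =
        Real.logb 2 (1 + Ψs * p) - Real.logb 2 (1 + Ψs * x) := by
    intro x hx
    have hrw : 1 + Ψs * (p - x) / (1 + Ψs * x) = (1 + Ψs * p) / (1 + Ψs * x) := by
      field_simp; ring
    rw [hrw, Real.logb_div (ne_of_gt h1p) (ne_of_gt hx)]
  have hmin : B / 2 * Real.logb 2 (1 + Ψs * (p - P) / (1 + Ψs * P)) ≤ c := by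
    rw [hlog P h1P, ← Real.logb_div (ne_of_gt h1p) (ne_of_gt h1P)]
    have hle : (1 + Ψs * p) / (1 + Ψs * P) ≤ M := by
      rw [div_le_iff₀ h1P]; linarith
    have := Real.logb_le_logb_of_le (b := 2) (by norm_num)
      (by positivity : (0:ℝ) < (1 + Ψs * p) / (1 + Ψs * P)) hle
    have hlogM : Real.logb 2 M = 2 * c / B := by
      rw [hM]; exact Real.logb_rpow (by norm_num) (by norm_num)
    rw [hlogM] at this
    calc B / 2 * Real.logb 2 ((1 + Ψs * p) / (1 + Ψs * P))
        ≤ B / 2 * (2 * c / B) := by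
          apply mul_le_mul_of_nonneg_left this (by positivity)
      _ = c := by field_simp
  have heq : B / 2 * Real.logb 2 (1 + Ψs * P) +
      min (B / 2 * Real.logb 2 (1 + Ψs * (p - P) / (1 + Ψs * P))) c =
      B / 2 * Real.logb 2 (1 + Ψs * p) := by
    rw [min_eq_left hmin, hlog P h1P]; ring
  refine ⟨heq, ?_⟩
  intro P' h0 hp'
  rw [heq]
  have h1P' : (0 : ℝ) < 1 + Ψs * P' := by positivity
  calc B / 2 * Real.logb 2 (1 + Ψs * P') +
        min (B / 2 * Real.logb 2 (1 + Ψs * (p - P') / (1 + Ψs * P'))) c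
      ≤ B / 2 * Real.logb 2 (1 + Ψs * P') +
        B / 2 * Real.logb 2 (1 + Ψs * (p - P') / (1 + Ψs * P')) := by
        exact add_le_add le_rfl (min_le_left _ _)
    _ = B / 2 * Real.logb 2 (1 + Ψs * p) := by rw [hlog P' h1P']; ring
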